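/- arXiv:1804.06186 — 2 statements merged into one kernel-verified Lean document; each statement's English description precedes it below -/
import Mathlib

section
/- Fix d ∈ {1,...,9}. With P(d,n) = (1/n)·Σ_{i=1}^{n} c_d(i)/i where c_d(i) is the number of integers in {1,...,i} with decimal leading digit d, the subsequence n ↦ P(d, (d+1)·10^n − 1) converges to β_d = 10·(9 + ln 10 + 9d·ln(1 − 1/(d+1)))/(81(d+1)). -/
open Finset

/-- The leading (first) decimal digit of a positive integer. -/
def leadingDigit (n : ℕ) : ℕ := n / 10 ^ (Nat.log 10 n)

/-- The number of integers in {1,...,i} whose decimal leading digit equals d. -/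
def ldCount (d i : ℕ) : ℕ := ((Finset.Icc 1 i).filter (fun j => leadingDigit j = d)).card

/-- Probability that the leading digit is d when i is uniform on {1,...,n} and j uniform on {1,...,i}. -/
noncomputable def P (d n : ℕ) : ℝ := (1 / (n : ℝ)) * ∑ i ∈ Finset.Icc 1 n, (ldCount d i : ℝ) / i

noncomputable def Hh (n : ℕ) : ℝ := ∑ i ∈ Finset.Ioc 0 n, (1:ℝ)/i

lemma Hh_eq (n : ℕ) : Hh n = (harmonic n : ℝ) := by
  induction n with
  | zero => simp [Hh, harmonic]
  | succ n ih =>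
      rw [Hh, Finset.sum_Ioc_succ_top (Nat.zero_le _), ← Hh, ih, harmonic_succ]
      push_cast
      ring

lemma Hh_diff (m n : ℕ) (h : m ≤ n) : ∑ i ∈ Finset.Ioc m n, (1:ℝ)/i = Hh n - Hh m := by
  rw [Hh, Hh, ← Finset.sum_Ioc_consecutive _ (Nat.zero_le m) h]
  ring

lemma tendsto_Hh_sub_log : Filter.Tendsto (fun n : ℕ => Hh n - Real.log n) Filter.atTop
    (nhds Real.eulerMascheroniConstant) := by
  simpa [Hh_eq] using Real.tendsto_harmonic_sub_log

lemma idx_tendsto (c : ℕ) (hc : 1 ≤ c) :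
    Filter.Tendsto (fun m : ℕ => c * 10 ^ m - 1) Filter.atTop Filter.atTop := by
  apply Filter.tendsto_atTop_mono (f := id) ?_ Filter.tendsto_id
  intro m
  have h1 : m < 2 ^ m := Nat.lt_two_pow_self
  have h2 : 2 ^ m ≤ 10 ^ m := Nat.pow_le_pow_left (by norm_num) m
  have h3 : 10 ^ m ≤ c * 10 ^ m := Nat.le_mul_of_pos_left _ hc
  simp only [id]
  omega

lemma log_nat_asym (c : ℕ) (hc : 1 ≤ c) :
    Filter.Tendsto (fun m : ℕ => Real.log ((c * 10 ^ m - 1 : ℕ) : ℝ)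
      - (m * Real.log 10 + Real.log c)) Filter.atTop (nhds 0) := by
  have hcpos : (0:ℝ) < c := by exact_mod_cast hc
  have hmain : Filter.Tendsto (fun m : ℕ => Real.log (1 - 1 / ((c:ℝ) * 10 ^ m)))
      Filter.atTop (nhds 0) := by
    have h1 : Filter.Tendsto (fun m : ℕ => (c:ℝ) * 10 ^ m) Filter.atTop Filter.atTop := by
      apply Filter.Tendsto.const_mul_atTop hcpos
      exact tendsto_pow_atTop_atTop_of_one_lt (by norm_num)
    have h2 : Filter.Tendsto (fun m : ℕ => 1 - 1 / ((c:ℝ) * 10 ^ m)) Filter.atTop (nhds 1) := by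
      have h0 : Filter.Tendsto (fun m : ℕ => 1 / ((c:ℝ) * 10 ^ m)) Filter.atTop (nhds 0) := by
        exact h1.inv_tendsto_atTop.congr (fun m => by simp [one_div])
      simpa using (tendsto_const_nhds (x := (1:ℝ))).sub h0
    have := (Real.continuousAt_log (one_ne_zero)).tendsto.comp h2
    simpa [Function.comp_def] using this
  apply hmain.congr'
  filter_upwards [Filter.eventually_ge_atTop 1] with m hm
  have hpow : (1:ℝ) ≤ 10 ^ m := one_le_pow₀ (by norm_num)
  have hge : (2:ℕ) ≤ c * 10 ^ m := by
    have : (10:ℕ) ≤ 10 ^ m := by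
      calc (10:ℕ) = 10 ^ 1 := (pow_one _).symm
      _ ≤ 10 ^ m := Nat.pow_le_pow_right (by norm_num) hm
    calc (2:ℕ) ≤ 10 ^ m := by omega
    _ ≤ c * 10 ^ m := Nat.le_mul_of_pos_left _ hc
  have hcast : ((c * 10 ^ m - 1 : ℕ) : ℝ) = (c:ℝ) * 10 ^ m - 1 := by
    push_cast [Nat.cast_sub (by omega : 1 ≤ c * 10 ^ m)]
    ring
  have hprodpos : (0:ℝ) < (c:ℝ) * 10 ^ m := by positivity
  have hprod2 : (2:ℝ) ≤ (c:ℝ) * 10 ^ m := by exact_mod_cast hge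
  have hfact : (c:ℝ) * 10 ^ m - 1 = ((c:ℝ) * 10 ^ m) * (1 - 1 / ((c:ℝ) * 10 ^ m)) := by
    field_simp
  have hsubpos : (0:ℝ) < 1 - 1 / ((c:ℝ) * 10 ^ m) := by
    rw [sub_pos, div_lt_one hprodpos]; linarith
  rw [hcast, hfact, Real.log_mul (by positivity) (ne_of_gt hsubpos),
    Real.log_mul (ne_of_gt hcpos) (by positivity), Real.log_pow]
  push_cast
  ring

lemma tendsto_Hh_scaled (c : ℕ) (hc : 1 ≤ c) :
    Filter.Tendsto (fun m : ℕ => Hh (c * 10 ^ m - 1) - (m * Real.log 10 + Real.log c))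
      Filter.atTop (nhds Real.eulerMascheroniConstant) := by
  have h1 := tendsto_Hh_sub_log.comp (idx_tendsto c hc)
  have h2 := log_nat_asym c hc
  have := h1.add h2
  rw [add_zero] at this
  apply this.congr
  intro m
  simp only [Function.comp]
  ring

lemma tendsto_Hh_diff (c1 c2 : ℕ) (h1 : 1 ≤ c1) (h2 : 1 ≤ c2) :
    Filter.Tendsto (fun m : ℕ => Hh (c2 * 10 ^ m - 1) - Hh (c1 * 10 ^ m - 1))
      Filter.atTop (nhds (Real.log c2 - Real.log c1)) := by
  have := (tendsto_Hh_scaled c2 h2).sub (tendsto_Hh_scaled c1 h1)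
  rw [sub_self] at this
  have h := this.add (tendsto_const_nhds (x := Real.log c2 - Real.log c1))
  rw [zero_add] at h
  apply h.congr
  intro m
  ring


lemma geom_ten (k : ℕ) : ∑ m ∈ Finset.range (k+1), (10:ℝ)^m = (10 ^ (k+1) - 1) / 9 := by
  rw [geom_sum_eq (by norm_num)]
  norm_num

lemma cesaro10_zero (v : ℕ → ℝ) (hv : Filter.Tendsto (fun m => v m / 10 ^ m)
    Filter.atTop (nhds 0)) :
    Filter.Tendsto (fun k => (∑ m ∈ Finset.range (k+1), v m) / 10 ^ k) Filter.atTop (nhds 0) := by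
  rw [Metric.tendsto_atTop] at hv ⊢
  intro ε hε
  obtain ⟨M, hM⟩ := hv (9 * ε / 40) (by linarith)
  set C : ℝ := ∑ m ∈ Finset.range M, |v m| with hC
  obtain ⟨K, hK⟩ := pow_unbounded_of_one_lt (R := ℝ) (C / (ε / 2)) (by norm_num : (1:ℝ) < 10)
  refine ⟨max M K, fun k hk => ?_⟩
  have hkM : M ≤ k := le_trans (le_max_left _ _) hk
  have hkK : K ≤ k := le_trans (le_max_right _ _) hk
  have hpow : (0:ℝ) < 10 ^ k := by positivity
  have hbound : ∀ m, M ≤ m → |v m| ≤ (9 * ε / 40) * 10 ^ m := by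
    intro m hm
    have := hM m hm
    rw [Real.dist_eq, sub_zero, abs_div, abs_of_pos (by positivity : (0:ℝ) < 10 ^ m)] at this
    rw [div_lt_iff₀ (by positivity)] at this
    linarith
  have hsum : |∑ m ∈ Finset.range (k+1), v m| ≤ C + (9 * ε / 40) * ((10 ^ (k+1) - 1) / 9) := by
    calc |∑ m ∈ Finset.range (k+1), v m| ≤ ∑ m ∈ Finset.range (k+1), |v m| :=
          Finset.abs_sum_le_sum_abs _ _
    _ = C + ∑ m ∈ Finset.Ico M (k+1), |v m| := by
          rw [hC, ← Finset.sum_range_add_sum_Ico _ (by omega : M ≤ k + 1)]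
    _ ≤ C + ∑ m ∈ Finset.Ico M (k+1), (9 * ε / 40) * 10 ^ m := by
          gcongr with m hm
          exact hbound m (Finset.mem_Ico.mp hm).1
    _ ≤ C + ∑ m ∈ Finset.range (k+1), (9 * ε / 40) * 10 ^ m := by
          have hsub : Finset.Ico M (k+1) ⊆ Finset.range (k+1) := by
            intro m hm
            simp only [Finset.mem_Ico] at hm
            exact Finset.mem_range.mpr hm.2
          gcongr C + ?_
          exact Finset.sum_le_sum_of_subset_of_nonneg hsub (fun m _ _ => by positivity)
    _ = C + (9 * ε / 40) * ((10 ^ (k+1) - 1) / 9) := by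
          rw [← Finset.mul_sum, geom_ten]
  have hCk : C < (ε / 2) * 10 ^ k := by
    have h10 : (10:ℝ) ^ K ≤ 10 ^ k := by gcongr; · norm_num
    rw [div_lt_iff₀ (by linarith)] at hK
    nlinarith
  rw [Real.dist_eq, sub_zero, abs_div, abs_of_pos hpow, div_lt_iff₀ hpow]
  have h2 : (9 * ε / 40) * ((10 ^ (k+1) - 1) / 9) ≤ (ε / 4) * 10 ^ k := by
    have : (10:ℝ) ^ (k+1) = 10 * 10 ^ k := by ring
    rw [this]
    nlinarith
  calc |∑ m ∈ Finset.range (k+1), v m| ≤ C + (9 * ε / 40) * ((10 ^ (k+1) - 1) / 9) := hsum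
  _ < (ε/2) * 10 ^ k + (ε/4) * 10 ^ k := by linarith
  _ < ε * 10 ^ k := by nlinarith

lemma cesaro10 (v : ℕ → ℝ) (L : ℝ)
    (hv : Filter.Tendsto (fun m => v m / 10 ^ m) Filter.atTop (nhds L)) :
    Filter.Tendsto (fun k => (∑ m ∈ Finset.range (k+1), v m) / 10 ^ k) Filter.atTop
      (nhds (10 * L / 9)) := by
  have hw : Filter.Tendsto (fun m => (v m - L * 10 ^ m) / 10 ^ m) Filter.atTop (nhds 0) := by
    have := hv.sub (tendsto_const_nhds (x := L))
    rw [sub_self] at this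
    apply this.congr
    intro m
    field_simp
  have h0 := cesaro10_zero _ hw
  have hgeom : Filter.Tendsto (fun k : ℕ => (∑ m ∈ Finset.range (k+1), (10:ℝ) ^ m) / 10 ^ k)
      Filter.atTop (nhds (10 / 9)) := by
    have h1 : Filter.Tendsto (fun k : ℕ => (10:ℝ)/9 - (1/9) * (1/10) ^ k) Filter.atTop
        (nhds (10/9)) := by
      have : Filter.Tendsto (fun k : ℕ => ((1:ℝ)/10) ^ k) Filter.atTop (nhds 0) :=
        tendsto_pow_atTop_nhds_zero_of_lt_one (by norm_num) (by norm_num)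
      have := (tendsto_const_nhds (x := (10:ℝ)/9)).sub (this.const_mul (1/9))
      simpa using this
    apply h1.congr
    intro k
    rw [geom_ten]
    have : (10:ℝ) ^ k ≠ 0 := by positivity
    field_simp
    rw [sub_mul, ← mul_pow, pow_succ]; norm_num; ring
  have := h0.add (hgeom.const_mul L)
  rw [zero_add] at this
  have heq : 10 * L / 9 = L * (10 / 9) := by ring
  rw [heq]
  apply this.congr
  intro k
  rw [Finset.sum_sub_distrib, ← Finset.mul_sum]
  field_simp
  ring


lemma leadingDigit_eq_iff {d j : ℕ} (hd1 : 1 ≤ d) (hd9 : d ≤ 9) (hj : 1 ≤ j) :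
    leadingDigit j = d ↔ ∃ m, d * 10 ^ m ≤ j ∧ j < (d + 1) * 10 ^ m := by
  constructor
  · intro h
    refine ⟨Nat.log 10 j, ?_, ?_⟩
    · rw [← h, leadingDigit]
      exact Nat.div_mul_le_self j _
    · rw [← h, leadingDigit]
      have hpos : 0 < 10 ^ (Nat.log 10 j) := by positivity
      have h1 := Nat.div_add_mod j (10 ^ (Nat.log 10 j))
      have hmod := Nat.mod_lt j hpos
      have h2 : (j / 10 ^ (Nat.log 10 j) + 1) * 10 ^ (Nat.log 10 j)
          = 10 ^ (Nat.log 10 j) * (j / 10 ^ (Nat.log 10 j)) + 10 ^ (Nat.log 10 j) := by ring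
      omega
  · rintro ⟨m, h1, h2⟩
    have hb1 : 10 ^ m ≤ d * 10 ^ m := Nat.le_mul_of_pos_left _ hd1
    have hb2 : (d + 1) * 10 ^ m ≤ 10 ^ (m + 1) := by
      rw [pow_succ]
      calc (d + 1) * 10 ^ m ≤ 10 * 10 ^ m := Nat.mul_le_mul_right _ (by omega)
      _ = 10 ^ m * 10 := by ring
    have hlog : Nat.log 10 j = m :=
      Nat.log_eq_of_pow_le_of_lt_pow (le_trans hb1 h1) (lt_of_lt_of_le h2 hb2)
    rw [leadingDigit, hlog]
    exact Nat.div_eq_of_lt_le h1 h2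

lemma ldCount_formula {d : ℕ} (hd1 : 1 ≤ d) (hd9 : d ≤ 9) (i k : ℕ) (hi : 1 ≤ i)
    (hik : i < 10 ^ (k + 1)) :
    ldCount d i = ∑ m ∈ Finset.range (k + 1),
      (min (i + 1) ((d + 1) * 10 ^ m) - min (i + 1) (d * 10 ^ m)) := by
  rw [ldCount]
  have hset : (Finset.Icc 1 i).filter (fun j => leadingDigit j = d)
      = (Finset.range (k + 1)).biUnion
          (fun m => Finset.Ico (d * 10 ^ m) (min (i + 1) ((d + 1) * 10 ^ m))) := by
    ext j
    simp only [Finset.mem_filter, Finset.mem_Icc, Finset.mem_biUnion, Finset.mem_range,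
      Finset.mem_Ico, lt_min_iff]
    constructor
    · rintro ⟨⟨hj1, hji⟩, hld⟩
      obtain ⟨m, h1, h2⟩ := (leadingDigit_eq_iff hd1 hd9 hj1).mp hld
      have hmj : 10 ^ m ≤ j := le_trans (Nat.le_mul_of_pos_left _ hd1) h1
      have hmk : 10 ^ m < 10 ^ (k + 1) := by omega
      exact ⟨m, (Nat.pow_lt_pow_iff_right (by norm_num)).mp hmk, h1, by omega, h2⟩
    · rintro ⟨m, _, h1, hji, h2⟩
      have hb1 : 1 ≤ 10 ^ m := Nat.one_le_pow _ _ (by norm_num)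
      have hb2 : 10 ^ m ≤ d * 10 ^ m := Nat.le_mul_of_pos_left _ hd1
      exact ⟨⟨by omega, by omega⟩, (leadingDigit_eq_iff hd1 hd9 (by omega)).mpr ⟨m, h1, h2⟩⟩
  rw [hset, Finset.card_biUnion]
  · refine Finset.sum_congr rfl (fun m _ => ?_)
    rw [Nat.card_Ico]
    have hab : d * 10 ^ m ≤ (d + 1) * 10 ^ m := Nat.mul_le_mul_right _ (by omega)
    omega
  · intro m _ m' _ hne
    have key : ∀ a b : ℕ, a < b →
        Disjoint (Finset.Ico (d * 10 ^ a) (min (i + 1) ((d + 1) * 10 ^ a)))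
          (Finset.Ico (d * 10 ^ b) (min (i + 1) ((d + 1) * 10 ^ b))) := by
      intro a b hab
      rw [Finset.disjoint_left]
      intro j hj hj'
      simp only [Finset.mem_Ico, lt_min_iff] at hj hj'
      have h1 : (d + 1) * 10 ^ a ≤ 10 ^ (a + 1) := by
        rw [pow_succ]
        calc (d + 1) * 10 ^ a ≤ 10 * 10 ^ a := Nat.mul_le_mul_right _ (by omega)
        _ = 10 ^ a * 10 := by ring
      have h2 : 10 ^ (a + 1) ≤ 10 ^ b := Nat.pow_le_pow_right (by norm_num) (by omega)
      have h3 : 10 ^ b ≤ d * 10 ^ b := Nat.le_mul_of_pos_left _ hd1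
      omega
    rcases Nat.lt_or_ge m m' with h | h
    · exact key m m' h
    · exact (key m' m (by omega)).symm

lemma innerSumEval {d : ℕ} (hd1 : 1 ≤ d) (hd9 : d ≤ 9) (k m : ℕ) (hm : m ≤ k) :
    ∑ i ∈ Finset.Ioc 0 ((d + 1) * 10 ^ k - 1),
        (((min (i + 1) ((d + 1) * 10 ^ m) : ℕ) : ℝ) - ((min (i + 1) (d * 10 ^ m) : ℕ) : ℝ)) / i
      = 10 ^ m + (1 - (d : ℝ) * 10 ^ m) * (Hh ((d + 1) * 10 ^ m - 1) - Hh (d * 10 ^ m - 1))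
        + 10 ^ m * (Hh ((d + 1) * 10 ^ k - 1) - Hh ((d + 1) * 10 ^ m - 1)) := by
  set a := d * 10 ^ m with ha
  set b := (d + 1) * 10 ^ m with hb
  set N := (d + 1) * 10 ^ k - 1 with hN
  have hpm : (1:ℕ) ≤ 10 ^ m := Nat.one_le_pow _ _ (by norm_num)
  have ha1 : 1 ≤ a := le_trans hpm (Nat.le_mul_of_pos_left _ hd1)
  have hab : a + 10 ^ m = b := by rw [ha, hb]; ring
  have hbN : b - 1 ≤ N := by
    have : b ≤ (d + 1) * 10 ^ k := Nat.mul_le_mul_left _ (Nat.pow_le_pow_right (by norm_num) hm)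
    omega
  have h1 : a - 1 ≤ b - 1 := by omega
  have h0a : 0 ≤ a - 1 := Nat.zero_le _
  set F : ℕ → ℝ := fun i =>
    (((min (i + 1) b : ℕ) : ℝ) - ((min (i + 1) a : ℕ) : ℝ)) / i with hF
  rw [← Finset.sum_Ioc_consecutive F h0a (le_trans h1 hbN),
    ← Finset.sum_Ioc_consecutive F h1 hbN]
  have piece1 : ∑ i ∈ Finset.Ioc 0 (a - 1), F i = 0 := by
    apply Finset.sum_eq_zero
    intro i hi
    simp only [Finset.mem_Ioc] at hi
    have h1 : min (i + 1) b = i + 1 := min_eq_left (by omega)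
    have h2 : min (i + 1) a = i + 1 := min_eq_left (by omega)
    rw [hF]
    simp [h1, h2]
  have piece2 : ∑ i ∈ Finset.Ioc (a - 1) (b - 1), F i
      = 10 ^ m + (1 - (d : ℝ) * 10 ^ m) * (Hh (b - 1) - Hh (a - 1)) := by
    have heval : ∀ i ∈ Finset.Ioc (a - 1) (b - 1), F i = 1 + (1 - (a : ℝ)) * (1 / i) := by
      intro i hi
      simp only [Finset.mem_Ioc] at hi
      have hia : a ≤ i := by omega
      have hib : i + 1 ≤ b := by omega
      have h1 : min (i + 1) b = i + 1 := min_eq_left hib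
      have h2 : min (i + 1) a = a := min_eq_right (by omega)
      have hi0 : (i : ℝ) ≠ 0 := by
        have hi1 : (1:ℕ) ≤ i := by omega
        have : (0:ℝ) < (i:ℝ) := by exact_mod_cast (by omega : 0 < i)
        exact this.ne'
      rw [hF]
      simp only [h1, h2]
      push_cast
      field_simp
      ring
    rw [Finset.sum_congr rfl heval, Finset.sum_add_distrib, Finset.sum_const, ← Finset.mul_sum,
      Hh_diff _ _ h1, Nat.card_Ioc]
    have hcard : b - 1 - (a - 1) = 10 ^ m := by omega
    rw [hcard, ha]
    push_cast
    ring
  have piece3 : ∑ i ∈ Finset.Ioc (b - 1) N, F i = 10 ^ m * (Hh N - Hh (b - 1)) := by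
    have heval : ∀ i ∈ Finset.Ioc (b - 1) N, F i = (10 : ℝ) ^ m * (1 / i) := by
      intro i hi
      simp only [Finset.mem_Ioc] at hi
      have hib : b ≤ i := by omega
      have h1 : min (i + 1) b = b := min_eq_right (by omega)
      have h2 : min (i + 1) a = a := min_eq_right (by omega)
      rw [hF]
      simp only [h1, h2]
      have hba : ((b : ℕ) : ℝ) - ((a : ℕ) : ℝ) = (10 : ℝ) ^ m := by
        rw [ha, hb]; push_cast; ring
      rw [hba]
      ring
    rw [Finset.sum_congr rfl heval, ← Finset.mul_sum, Hh_diff _ _ hbN]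
  rw [piece1, piece2, piece3]
  ring

lemma sum_eval {d : ℕ} (hd1 : 1 ≤ d) (hd9 : d ≤ 9) (k : ℕ) :
    ∑ i ∈ Finset.Icc 1 ((d + 1) * 10 ^ k - 1), (ldCount d i : ℝ) / i
      = ∑ m ∈ Finset.range (k + 1),
          (10 ^ m + (1 - (d : ℝ) * 10 ^ m) * (Hh ((d + 1) * 10 ^ m - 1) - Hh (d * 10 ^ m - 1))
            + 10 ^ m * (Hh ((d + 1) * 10 ^ k - 1) - Hh ((d + 1) * 10 ^ m - 1))) := by
  set N := (d + 1) * 10 ^ k - 1 with hN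
  have hIcc : Finset.Icc 1 N = Finset.Ioc 0 N := rfl
  have hNlt : N < 10 ^ (k + 1) := by
    have h1 : (d + 1) * 10 ^ k ≤ 10 * 10 ^ k := Nat.mul_le_mul_right _ (by omega)
    have h2 : 10 * 10 ^ k = 10 ^ (k + 1) := by ring
    have h3 : (1:ℕ) ≤ 10 ^ k := Nat.one_le_pow _ _ (by norm_num)
    omega
  have hstep : ∀ i ∈ Finset.Ioc 0 N, (ldCount d i : ℝ) / i
      = ∑ m ∈ Finset.range (k + 1),
          ((((min (i + 1) ((d + 1) * 10 ^ m) : ℕ) : ℝ) - ((min (i + 1) (d * 10 ^ m) : ℕ) : ℝ)) / i) := by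
    intro i hi
    simp only [Finset.mem_Ioc] at hi
    rw [ldCount_formula hd1 hd9 i k (by omega) (by omega)]
    rw [← Finset.sum_div]
    congr 1
    rw [Nat.cast_sum]
    refine Finset.sum_congr rfl (fun m _ => ?_)
    have hmono : min (i + 1) (d * 10 ^ m) ≤ min (i + 1) ((d + 1) * 10 ^ m) :=
      min_le_min le_rfl (Nat.mul_le_mul_right _ (by omega))
    exact Nat.cast_sub hmono
  rw [hIcc, Finset.sum_congr rfl hstep, Finset.sum_comm]
  exact Finset.sum_congr rfl (fun m hm =>
    innerSumEval hd1 hd9 k m (Nat.lt_succ_iff.mp (Finset.mem_range.mp hm)))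


lemma sum_rearrange (d k : ℕ) :
    ∑ m ∈ Finset.range (k + 1),
        (10 ^ m + (1 - (d : ℝ) * 10 ^ m) * (Hh ((d + 1) * 10 ^ m - 1) - Hh (d * 10 ^ m - 1))
          + 10 ^ m * (Hh ((d + 1) * 10 ^ k - 1) - Hh ((d + 1) * 10 ^ m - 1)))
      = (∑ m ∈ Finset.range (k + 1),
          (10 ^ m + (1 - (d : ℝ) * 10 ^ m) * (Hh ((d + 1) * 10 ^ m - 1) - Hh (d * 10 ^ m - 1))))
        + ∑ r ∈ Finset.range k,
            (Hh ((d + 1) * 10 ^ (r + 1) - 1) - Hh ((d + 1) * 10 ^ r - 1)) * ((10 ^ (r + 1) - 1) / 9) := by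
  rw [Finset.sum_add_distrib]
  congr 1
  set f : ℕ → ℝ := fun m => Hh ((d + 1) * 10 ^ m - 1) with hf
  have tele : ∀ m, m ≤ k → f k - f m = ∑ r ∈ Finset.Ico m k, (f (r + 1) - f r) := by
    intro m hm
    rw [Finset.sum_Ico_eq_sub _ hm, Finset.sum_range_sub, Finset.sum_range_sub]
    ring
  calc ∑ m ∈ Finset.range (k + 1), (10:ℝ) ^ m * (f k - f m)
      = ∑ m ∈ Finset.range (k + 1), ∑ r ∈ Finset.Ico m k, (10:ℝ) ^ m * (f (r + 1) - f r) := by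
        refine Finset.sum_congr rfl (fun m hm => ?_)
        rw [tele m (Nat.lt_succ_iff.mp (Finset.mem_range.mp hm)), Finset.mul_sum]
    _ = ∑ m ∈ Finset.Ico 0 k, ∑ r ∈ Finset.Ico m k, (10:ℝ) ^ m * (f (r + 1) - f r) := by
        rw [Finset.sum_range_succ, Finset.range_eq_Ico]
        simp
    _ = ∑ r ∈ Finset.Ico 0 k, ∑ m ∈ Finset.Ico 0 (r + 1), (10:ℝ) ^ m * (f (r + 1) - f r) := by
        rw [Finset.sum_Ico_Ico_comm]
    _ = ∑ r ∈ Finset.range k, (f (r + 1) - f r) * ((10 ^ (r + 1) - 1) / 9) := by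
        rw [← Finset.range_eq_Ico]
        refine Finset.sum_congr rfl (fun r _ => ?_)
        rw [← Finset.sum_mul, mul_comm, ← Finset.range_eq_Ico, geom_sum_eq (by norm_num : (10:ℝ) ≠ 1)]
        norm_num


theorem tendsto_P_psi (d : ℕ) (hd : d ∈ Finset.Icc 1 9) :
    Filter.Tendsto (fun n : ℕ => P d ((d + 1) * 10 ^ n - 1)) Filter.atTop
      (nhds (10 * (9 + Real.log 10 + 9 * (d : ℝ) * Real.log (1 - 1 / ((d : ℝ) + 1))) /
        (81 * ((d : ℝ) + 1)))) := by
  rw [Finset.mem_Icc] at hd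
  obtain ⟨hd1, hd9⟩ := hd
  have hd0 : (0:ℝ) < d := by exact_mod_cast hd1
  set c1 : ℝ := Real.log ((d:ℝ) + 1) - Real.log d with hc1
  -- limits of harmonic differences
  have hg : Filter.Tendsto (fun m : ℕ => Hh ((d + 1) * 10 ^ m - 1) - Hh (d * 10 ^ m - 1))
      Filter.atTop (nhds c1) := by
    have := tendsto_Hh_diff d (d + 1) hd1 (by omega)
    have heq : Real.log ((d + 1 : ℕ) : ℝ) - Real.log ((d : ℕ) : ℝ) = c1 := by push_cast; rfl
    rwa [heq] at this
  have hq : Filter.Tendsto (fun r : ℕ => Hh ((d + 1) * 10 ^ (r + 1) - 1) - Hh ((d + 1) * 10 ^ r - 1))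
      Filter.atTop (nhds (Real.log 10)) := by
    have h := tendsto_Hh_diff (d + 1) (10 * (d + 1)) (by omega) (by omega)
    have heq : Real.log ((10 * (d + 1) : ℕ) : ℝ) - Real.log ((d + 1 : ℕ) : ℝ) = Real.log 10 := by
      push_cast
      rw [Real.log_mul (by norm_num) (by positivity)]
      ring
    rw [heq] at h
    apply h.congr
    intro r
    congr 2 <;> ring
  -- pieces divided by 10^m
  have hpow0 : Filter.Tendsto (fun m : ℕ => (1:ℝ) / 10 ^ m) Filter.atTop (nhds 0) := by
    have := tendsto_pow_atTop_nhds_zero_of_lt_one (by norm_num : (0:ℝ) ≤ 1/10) (by norm_num)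
    apply this.congr
    intro m
    rw [div_pow, one_pow]
  have ha : Filter.Tendsto (fun m : ℕ =>
      (10 ^ m + (1 - (d : ℝ) * 10 ^ m) * (Hh ((d + 1) * 10 ^ m - 1) - Hh (d * 10 ^ m - 1))) / 10 ^ m)
      Filter.atTop (nhds (1 - d * c1)) := by
    have h2 : Filter.Tendsto (fun m : ℕ => (1:ℝ) / 10 ^ m - d) Filter.atTop (nhds (0 - d)) :=
      hpow0.sub tendsto_const_nhds
    have h3 := (tendsto_const_nhds (x := (1:ℝ))).add (h2.mul hg)
    have heq : (1:ℝ) + (0 - d) * c1 = 1 - d * c1 := by ring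
    rw [heq] at h3
    apply h3.congr
    intro m
    have hp : (10:ℝ) ^ m ≠ 0 := by positivity
    generalize Hh ((d + 1) * 10 ^ m - 1) - Hh (d * 10 ^ m - 1) = G
    have e1 : ((1:ℝ) - d * 10 ^ m) / 10 ^ m = 1 / 10 ^ m - d := by
      rw [sub_div, mul_div_assoc, div_self hp, mul_one]
    rw [add_div, mul_div_right_comm, div_self hp, e1]
  have hA := cesaro10 _ _ ha
  -- the c-part
  have hratio : Filter.Tendsto (fun r : ℕ => ((10:ℝ) ^ (r + 1) - 1) / 9 / 10 ^ r)
      Filter.atTop (nhds (10 / 9)) := by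
    have h1 := (tendsto_const_nhds (x := (10:ℝ)/9)).sub (hpow0.const_mul (1/9))
    rw [mul_zero, sub_zero] at h1
    apply h1.congr
    intro r
    have hp : (10:ℝ) ^ r ≠ 0 := by positivity
    rw [pow_succ]
    field_simp
  have hc : Filter.Tendsto (fun r : ℕ =>
      ((Hh ((d + 1) * 10 ^ (r + 1) - 1) - Hh ((d + 1) * 10 ^ r - 1)) * (((10:ℝ) ^ (r + 1) - 1) / 9)) / 10 ^ r)
      Filter.atTop (nhds (Real.log 10 * (10 / 9))) := by
    have := hq.mul hratio
    apply this.congr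
    intro r
    rw [mul_div_assoc]
  have hC := cesaro10 _ _ hc
  have hC' : Filter.Tendsto (fun k : ℕ =>
      (∑ r ∈ Finset.range k, ((Hh ((d + 1) * 10 ^ (r + 1) - 1) - Hh ((d + 1) * 10 ^ r - 1))
        * (((10:ℝ) ^ (r + 1) - 1) / 9))) / 10 ^ k)
      Filter.atTop (nhds (10 * (Real.log 10 * (10 / 9)) / 9 / 10)) := by
    have h := (hC.comp (Filter.tendsto_sub_atTop_nat 1)).div_const 10
    apply h.congr'
    filter_upwards [Filter.eventually_ge_atTop 1] with k hk
    have hk1 : k - 1 + 1 = k := by omega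
    simp only [Function.comp]
    rw [hk1]
    have : (10:ℝ) ^ k = 10 ^ (k - 1) * 10 := by
      rw [← pow_succ, hk1]
    rw [this]
    have hp : (10:ℝ) ^ (k-1) ≠ 0 := by positivity
    field_simp
  -- total sum limit
  have hS : Filter.Tendsto (fun k : ℕ =>
      (∑ i ∈ Finset.Icc 1 ((d + 1) * 10 ^ k - 1), (ldCount d i : ℝ) / i) / 10 ^ k)
      Filter.atTop (nhds (10 * (1 - d * c1) / 9 + 10 * (Real.log 10 * (10 / 9)) / 9 / 10)) := by
    have := hA.add hC'
    apply this.congr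
    intro k
    rw [sum_eval hd1 hd9 k, sum_rearrange d k, add_div]
  -- denominator limit
  have hN : Filter.Tendsto (fun k : ℕ => (((d + 1) * 10 ^ k - 1 : ℕ) : ℝ) / 10 ^ k)
      Filter.atTop (nhds ((d:ℝ) + 1)) := by
    have h1 := (tendsto_const_nhds (x := (d:ℝ) + 1)).sub hpow0
    rw [sub_zero] at h1
    apply h1.congr
    intro k
    have hge : (1:ℕ) ≤ (d + 1) * 10 ^ k :=
      le_trans (Nat.one_le_pow _ _ (by norm_num)) (Nat.le_mul_of_pos_left _ (by omega))
    rw [Nat.cast_sub hge]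
    have hp : (10:ℝ) ^ k ≠ 0 := by positivity
    push_cast
    field_simp
  have hP := hS.div hN (by positivity)
  -- identify the function
  have hfun : ∀ k : ℕ, P d ((d + 1) * 10 ^ k - 1)
      = ((∑ i ∈ Finset.Icc 1 ((d + 1) * 10 ^ k - 1), (ldCount d i : ℝ) / i) / 10 ^ k)
        / ((((d + 1) * 10 ^ k - 1 : ℕ) : ℝ) / 10 ^ k) := by
    intro k
    rw [P]
    have hge : (2:ℕ) ≤ (d + 1) * 10 ^ k := by
      have h3 : (1:ℕ) ≤ 10 ^ k := Nat.one_le_pow _ _ (by norm_num)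
      have : 2 * 1 ≤ (d + 1) * 10 ^ k := Nat.mul_le_mul (by omega) h3
      omega
    have hNpos : (0:ℝ) < (((d + 1) * 10 ^ k - 1 : ℕ) : ℝ) := by
      have : (1:ℕ) ≤ (d + 1) * 10 ^ k - 1 := by omega
      exact_mod_cast Nat.lt_of_lt_of_le Nat.zero_lt_one this
    have hp : (10:ℝ) ^ k ≠ 0 := by positivity
    rw [div_div_div_comm, div_self hp, div_one, one_div, inv_mul_eq_div]
  -- identify the constant
  have hconst : 10 * (9 + Real.log 10 + 9 * (d : ℝ) * Real.log (1 - 1 / ((d : ℝ) + 1)))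
      / (81 * ((d : ℝ) + 1))
      = (10 * (1 - d * c1) / 9 + 10 * (Real.log 10 * (10 / 9)) / 9 / 10) / ((d:ℝ) + 1) := by
    have h1 : (1:ℝ) - 1 / ((d:ℝ) + 1) = d / ((d:ℝ) + 1) := by
      field_simp
      ring
    rw [h1, Real.log_div (ne_of_gt hd0) (by positivity), hc1]
    field_simp
    ring
  rw [hconst]
  exact hP.congr (fun k => (hfun k).symm)
end

section
/- For all n ≥ 1 and all p, q ∈ {1,...,9} with p < q, we have P(p,n) ≥ P(q,n), where P(d,n) = (1/n)·Σ_{i=1}^{n} c_d(i)/i and c_d(i) counts integers in {1,...,i} with decimal leading digit d. -/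
open Finset

lemma shift_key (p q j : ℕ) (hp1 : 1 ≤ p) (hq9 : q ≤ 9) (hpq : p < q)
    (hj : 1 ≤ j) (hld : leadingDigit j = q) :
    (q - p) * 10 ^ Nat.log 10 j ≤ j ∧
    1 ≤ j - (q - p) * 10 ^ Nat.log 10 j ∧
    Nat.log 10 (j - (q - p) * 10 ^ Nat.log 10 j) = Nat.log 10 j ∧
    leadingDigit (j - (q - p) * 10 ^ Nat.log 10 j) = p := by
  set k := Nat.log 10 j with hk
  set t := 10 ^ k with ht
  have ht1 : 1 ≤ t := Nat.one_le_pow _ _ (by norm_num)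
  have hld' : j / t = q := hld
  have hqt : q * t ≤ j := by
    calc q * t = (j / t) * t := by rw [hld']
    _ ≤ j := Nat.div_mul_le_self j t
  have hub : j < (q + 1) * t := by
    have : j / t < q + 1 := by omega
    exact (Nat.div_lt_iff_lt_mul (by omega)).mp this
  have hqp : (q - p) * t ≤ j :=
    le_trans (Nat.mul_le_mul_right t (Nat.sub_le q p)) hqt
  have hsplit : p * t + (q - p) * t = q * t := by
    rw [← Nat.add_mul]; congr 1; omega
  have hsplit2 : (p + 1) * t + (q - p) * t = (q + 1) * t := by
    rw [← Nat.add_mul]; congr 1; omega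
  have hlb : p * t ≤ j - (q - p) * t := by omega
  have hub2 : j - (q - p) * t < (p + 1) * t := by omega
  have h1 : 1 ≤ j - (q - p) * t := le_trans (by nlinarith) hlb
  have hlog : Nat.log 10 (j - (q - p) * t) = k := by
    apply Nat.log_eq_of_pow_le_of_lt_pow
    · calc 10 ^ k = 1 * t := by rw [ht, one_mul]
      _ ≤ p * t := Nat.mul_le_mul_right t hp1
      _ ≤ _ := hlb
    · calc j - (q - p) * t < (p + 1) * t := hub2
      _ ≤ 10 * t := Nat.mul_le_mul_right t (by omega)
      _ = 10 ^ (k + 1) := by rw [ht, pow_succ, Nat.mul_comm]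
  refine ⟨hqp, h1, hlog, ?_⟩
  unfold leadingDigit
  rw [hlog, ← ht]
  exact Nat.div_eq_of_lt_le hlb hub2

lemma ldCount_le (p q i : ℕ) (hp1 : 1 ≤ p) (hq9 : q ≤ 9) (hpq : p < q) :
    ldCount q i ≤ ldCount p i := by
  apply Finset.card_le_card_of_injOn (fun j => j - (q - p) * 10 ^ Nat.log 10 j)
  · intro j hj
    simp only [Finset.mem_coe, Finset.mem_filter, Finset.mem_Icc] at hj ⊢
    obtain ⟨⟨hj1, hji⟩, hld⟩ := hj
    obtain ⟨h1, h2, h3, h4⟩ := shift_key p q j hp1 hq9 hpq hj1 hld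
    exact ⟨⟨h2, le_trans (Nat.sub_le _ _) hji⟩, h4⟩
  · intro a ha b hb hab
    simp only [Finset.coe_filter, Set.mem_setOf_eq, Finset.mem_Icc] at ha hb
    obtain ⟨⟨ha1, hai⟩, hlda⟩ := ha
    obtain ⟨⟨hb1, hbi⟩, hldb⟩ := hb
    obtain ⟨ha2, _, ha3, _⟩ := shift_key p q a hp1 hq9 hpq ha1 hlda
    obtain ⟨hb2, _, hb3, _⟩ := shift_key p q b hp1 hq9 hpq hb1 hldb
    simp only at hab
    have hk : Nat.log 10 a = Nat.log 10 b := by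
      rw [← ha3, ← hb3, hab]
    rw [hk] at hab ha2
    set c := (q - p) * 10 ^ Nat.log 10 b with hc
    omega

theorem P_anti (n p q : ℕ) (hn : 1 ≤ n) (hp : p ∈ Finset.Icc 1 9)
    (hq : q ∈ Finset.Icc 1 9) (hpq : p < q) : P p n ≥ P q n := by
  simp only [Finset.mem_Icc] at hp hq
  unfold P
  apply mul_le_mul_of_nonneg_left _ (by positivity)
  apply Finset.sum_le_sum
  intro i hi
  simp only [Finset.mem_Icc] at hi
  gcongr
  exact_mod_cast ldCount_le p q i hp.1 hq.2 hpq
end
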